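/- (Trichotomy for the Kerr frequency potential; Lemma 6.1 of the paper.) Let (ξ_τ, ξ_φ, Λ) be an admissible triple with Λ > 0. Then the function r ↦ V(r) on the interval (r₊, ∞) satisfies at least one of the following: (i) V is strictly decreasing on (r₊, ∞); (ii) V has a unique critical point r_max in (r₊, ∞) and V(r_max) > V(r) for every r ∈ (r₊, ∞) with r ≠ r_max (a global maximum); (iii) V has exactly two critical points r_min < r_max in (r₊, ∞), V attains a local minimum at r_min and a local maximum at r_max. Moreover, every critical point of V in (r₊, ∞) at which V has a local maximum lies in (r₊, 8m], and in case (iii) one has ξ_τ² > V(r_min). -/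

import Mathlib

open Real Set

noncomputable section

private lemma cubic_hda (c3 c2 c1 c0 x : ℝ) :
    HasDerivAt (fun y : ℝ => c3*y^3 + c2*y^2 + c1*y + c0) (3*c3*x^2 + 2*c2*x + c1) x := by
  have h3 : HasDerivAt (fun y : ℝ => y^3) (3*x^2) x := by simpa using hasDerivAt_pow 3 x
  have h2 : HasDerivAt (fun y : ℝ => y^2) (2*x) x := by simpa using hasDerivAt_pow 2 x
  have h := (((h3.const_mul c3).add (h2.const_mul c2)).add
    ((hasDerivAt_id' x).const_mul c1)).add_const c0
  refine h.congr_deriv ?_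
  ring

private lemma cubic_deriv (c3 c2 c1 c0 x : ℝ) :
    deriv (fun y : ℝ => c3*y^3 + c2*y^2 + c1*y + c0) x = 3*c3*x^2 + 2*c2*x + c1 :=
  (cubic_hda c3 c2 c1 c0 x).deriv

private lemma cubic_cont (c3 c2 c1 c0 : ℝ) :
    Continuous (fun y : ℝ => c3*y^3 + c2*y^2 + c1*y + c0) := by
  continuity

private lemma quad_factor {c3 c2 c1 : ℝ} {z1 z2 : ℝ} (h12 : z1 < z2)
    (hz1 : 3*c3*z1^2 + 2*c2*z1 + c1 = 0) (hz2 : 3*c3*z2^2 + 2*c2*z2 + c1 = 0) (r : ℝ) :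
    3*c3*r^2 + 2*c2*r + c1 = 3*c3*(r - z1)*(r - z2) := by
  have hne : z1 - z2 ≠ 0 := sub_ne_zero.mpr h12.ne
  have key : (z1 - z2)*(3*c3*(z1+z2) + 2*c2) = 0 := by linear_combination hz1 - hz2
  have h2 : 3*c3*(z1+z2) + 2*c2 = 0 := by
    rcases mul_eq_zero.mp key with h | h
    · exact absurd h hne
    · exact h
  have h1 : c1 = 3*c3*z1*z2 := by linear_combination hz1 - z1 * h2
  linear_combination r * h2 + h1

private lemma mono_neg {c3 c2 c1 c0 : ℝ} (hc3 : 0 < c3) {z1 z2 t : ℝ}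
    (h12 : z1 < z2) (hq1 : 3*c3*z1^2 + 2*c2*z1 + c1 = 0) (hq2 : 3*c3*z2^2 + 2*c2*z2 + c1 = 0)
    (ht : c3*t^3 + c2*t^2 + c1*t + c0 = 0) (h0t : 0 < t) (htz : t ≤ z1) :
    c3*0^3 + c2*0^2 + c1*0 + c0 < 0 := by
  have hmono : StrictMonoOn (fun y : ℝ => c3*y^3 + c2*y^2 + c1*y + c0) (Icc 0 t) := by
    apply strictMonoOn_of_deriv_pos (convex_Icc 0 t) (cubic_cont c3 c2 c1 c0).continuousOn
    intro x hx
    rw [interior_Icc] at hx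
    rw [cubic_deriv, quad_factor h12 hq1 hq2 x]
    have hx1 : x - z1 < 0 := by linarith [hx.2]
    have hx2 : x - z2 < 0 := by linarith [hx.2]
    nlinarith [mul_pos_of_neg_of_neg hx1 hx2]
  have := hmono (left_mem_Icc.mpr h0t.le) (right_mem_Icc.mpr h0t.le) h0t
  simpa [ht] using this

private lemma cubic_rolle {c3 c2 c1 c0 : ℝ} {x y : ℝ} (hxy : x < y)
    (hfx : c3*x^3 + c2*x^2 + c1*x + c0 = 0) (hfy : c3*y^3 + c2*y^2 + c1*y + c0 = 0) :
    ∃ c, x < c ∧ c < y ∧ 3*c3*c^2 + 2*c2*c + c1 = 0 := by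
  obtain ⟨c, hc, hc'⟩ := exists_deriv_eq_zero hxy (cubic_cont c3 c2 c1 c0).continuousOn
    (by rw [hfx, hfy])
  rw [cubic_deriv] at hc'
  exact ⟨c, hc.1, hc.2, hc'⟩

private lemma ivt_left {c3 c2 c1 c0 : ℝ} {a b : ℝ} (hab : a < b)
    (ha : c3*a^3 + c2*a^2 + c1*a + c0 ≤ 0) (hb : 0 < c3*b^3 + c2*b^2 + c1*b + c0) :
    ∃ t, a ≤ t ∧ t < b ∧ c3*t^3 + c2*t^2 + c1*t + c0 = 0 := by
  rcases eq_or_lt_of_le ha with h | h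
  · exact ⟨a, le_refl a, hab, h⟩
  · have := intermediate_value_Ioo hab.le (cubic_cont c3 c2 c1 c0).continuousOn
      (a := a) (b := b)
    obtain ⟨t, ht, ht0⟩ := this ⟨h, hb⟩
    exact ⟨t, ht.1.le, ht.2, ht0⟩

private lemma ivt_right {c3 c2 c1 c0 : ℝ} {a b : ℝ} (hab : a < b)
    (ha : 0 < c3*a^3 + c2*a^2 + c1*a + c0) (hb : c3*b^3 + c2*b^2 + c1*b + c0 ≤ 0) :
    ∃ t, a < t ∧ t ≤ b ∧ c3*t^3 + c2*t^2 + c1*t + c0 = 0 := by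
  rcases eq_or_lt_of_le hb with h | h
  · exact ⟨b, hab, le_refl b, h⟩
  · have := intermediate_value_Ioo' hab.le (cubic_cont c3 c2 c1 c0).continuousOn
      (a := a) (b := b)
    obtain ⟨t, ht, ht0⟩ := this ⟨h, ha⟩
    exact ⟨t, ht.1, ht.2.le, ht0⟩

/-- Infimum of nonpositivity set beyond a positive point. -/
private lemma cubic_inf {c3 c2 c1 c0 M : ℝ}
    (hM : ∀ r, M ≤ r → 0 < c3*r^3 + c2*r^2 + c1*r + c0) {lo : ℝ}
    (hlo : 0 < c3*lo^3 + c2*lo^2 + c1*lo + c0)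
    (hne : ∃ x, lo < x ∧ c3*x^3 + c2*x^2 + c1*x + c0 ≤ 0) :
    ∃ τ, lo < τ ∧ c3*τ^3 + c2*τ^2 + c1*τ + c0 = 0 ∧
      (∀ r, lo ≤ r → r < τ → 0 < c3*r^3 + c2*r^2 + c1*r + c0) ∧
      (∀ x, lo < x → c3*x^3 + c2*x^2 + c1*x + c0 ≤ 0 → τ ≤ x) := by
  set f : ℝ → ℝ := fun y : ℝ => c3*y^3 + c2*y^2 + c1*y + c0 with hf
  have hcont : Continuous f := cubic_cont c3 c2 c1 c0
  set S : Set ℝ := Icc lo M ∩ {r | f r ≤ 0} with hS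
  have hmemS : ∀ x, lo ≤ x → f x ≤ 0 → x ∈ S := by
    intro x h1 h2
    refine ⟨⟨h1, ?_⟩, h2⟩
    by_contra hc
    exact absurd (hM x (by linarith [lt_of_not_ge hc])) (by simpa using h2)
  have hSne : S.Nonempty := by
    obtain ⟨x, hx1, hx2⟩ := hne
    exact ⟨x, hmemS x hx1.le hx2⟩
  have hSbdd : BddBelow S := ⟨lo, fun r hr => hr.1.1⟩
  have hSclosed : IsClosed S :=
    isClosed_Icc.inter (isClosed_le hcont continuous_const)
  set τ := sInf S with hτ
  have hτS : τ ∈ S := hSclosed.csInf_mem hSne hSbdd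
  have hτle : ∀ x, lo < x → f x ≤ 0 → τ ≤ x := fun x h1 h2 => csInf_le hSbdd (hmemS x h1.le h2)
  have hloτ : lo < τ := by
    rcases eq_or_lt_of_le hτS.1.1 with h | h
    · exact absurd hτS.2 (by rw [← h]; simpa using hlo)
    · exact h
  have hmid : ∀ r, lo ≤ r → r < τ → 0 < f r := by
    intro r h1 h2
    by_contra hc
    have : τ ≤ r := csInf_le hSbdd (hmemS r h1 (le_of_not_gt (by simpa using hc)))
    linarith
  have hτ0 : f τ = 0 := by
    refine le_antisymm hτS.2 ?_
    have hcl : τ ∈ closure (Ico lo τ) := by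
      rw [closure_Ico hloτ.ne]
      exact ⟨hloτ.le, le_refl τ⟩
    have hsub : Ico lo τ ⊆ {r | 0 ≤ f r} := fun r hr => (hmid r hr.1 hr.2).le
    have : closure (Ico lo τ) ⊆ {r | 0 ≤ f r} :=
      closure_minimal hsub (isClosed_le continuous_const hcont)
    exact this hcl
  exact ⟨τ, hloτ, hτ0, hmid, hτle⟩

/-- Supremum of the nonpositivity set. -/
private lemma cubic_sup {c3 c2 c1 c0 M : ℝ}
    (hM : ∀ r, M ≤ r → 0 < c3*r^3 + c2*r^2 + c1*r + c0) {lo : ℝ}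
    (hne : ∃ x, lo ≤ x ∧ c3*x^3 + c2*x^2 + c1*x + c0 ≤ 0) :
    ∃ σ, lo ≤ σ ∧ c3*σ^3 + c2*σ^2 + c1*σ + c0 = 0 ∧
      (∀ r, σ < r → 0 < c3*r^3 + c2*r^2 + c1*r + c0) ∧
      (∀ x, lo ≤ x → c3*x^3 + c2*x^2 + c1*x + c0 ≤ 0 → x ≤ σ) ∧
      (∀ y, y < σ → ∃ x, y < x ∧ x ≤ σ ∧ c3*x^3 + c2*x^2 + c1*x + c0 ≤ 0) := by
  set f : ℝ → ℝ := fun y : ℝ => c3*y^3 + c2*y^2 + c1*y + c0 with hf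
  have hcont : Continuous f := cubic_cont c3 c2 c1 c0
  set S : Set ℝ := Icc lo M ∩ {r | f r ≤ 0} with hS
  have hmemS : ∀ x, lo ≤ x → f x ≤ 0 → x ∈ S := by
    intro x h1 h2
    refine ⟨⟨h1, ?_⟩, h2⟩
    by_contra hc
    exact absurd (hM x (by linarith [lt_of_not_ge hc])) (by simpa using h2)
  have hSne : S.Nonempty := by
    obtain ⟨x, hx1, hx2⟩ := hne
    exact ⟨x, hmemS x hx1 hx2⟩
  have hSbdd : BddAbove S := ⟨M, fun r hr => hr.1.2⟩
  have hSclosed : IsClosed S :=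
    isClosed_Icc.inter (isClosed_le hcont continuous_const)
  set σ := sSup S with hσ
  have hσS : σ ∈ S := hSclosed.csSup_mem hSne hSbdd
  have hub : ∀ x, lo ≤ x → f x ≤ 0 → x ≤ σ := fun x h1 h2 => le_csSup hSbdd (hmemS x h1 h2)
  have hpos : ∀ r, σ < r → 0 < f r := by
    intro r hr
    by_contra hc
    have hr0 : f r ≤ 0 := le_of_not_gt (by simpa using hc)
    have : r ≤ σ := hub r (le_trans hσS.1.1 hr.le) hr0
    linarith
  have hσ0 : f σ = 0 := by
    refine le_antisymm hσS.2 ?_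
    have hcl : σ ∈ closure (Ioi σ) := by
      rw [closure_Ioi]
      exact le_refl σ
    have : closure (Ioi σ) ⊆ {r | 0 ≤ f r} :=
      closure_minimal (fun r hr => (hpos r hr).le) (isClosed_le continuous_const hcont)
    exact this hcl
  refine ⟨σ, hσS.1.1, hσ0, hpos, hub, ?_⟩
  intro y hy
  obtain ⟨x, hxS, hyx⟩ := exists_lt_of_lt_csSup hSne hy
  exact ⟨x, hyx, le_csSup hSbdd hxS, hxS.2⟩



/-- No (nonpos, pos, nonpos) pattern on the positive half line for our cubics. -/
private lemma cubic_npn {c3 c2 c1 c0 M : ℝ} (hc3 : 0 < c3)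
    (h0 : 0 ≤ c3*(0:ℝ)^3 + c2*(0:ℝ)^2 + c1*(0:ℝ) + c0)
    (hM : ∀ r, M ≤ r → 0 < c3*r^3 + c2*r^2 + c1*r + c0)
    {u v w : ℝ} (hu : 0 < u) (huv : u < v) (hvw : v < w)
    (hfu : c3*u^3 + c2*u^2 + c1*u + c0 ≤ 0)
    (hfv : 0 < c3*v^3 + c2*v^2 + c1*v + c0)
    (hfw : c3*w^3 + c2*w^2 + c1*w + c0 ≤ 0) : False := by
  obtain ⟨s1, hs1u, hs1v, hs10⟩ := ivt_left huv hfu hfv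
  obtain ⟨s2, hvs2, hs20, hmid2, hlb2⟩ := cubic_inf hM hfv ⟨w, hvw, hfw⟩
  obtain ⟨σ, hvσ, hσ0, hposσ, hubσ, _⟩ := cubic_sup hM ⟨w, (by linarith : v ≤ w), hfw⟩
  have hs2σ : s2 ≤ σ := by
    have h1 : s2 ≤ w := hlb2 w hvw hfw
    have h2 : w ≤ σ := hubσ w (by linarith) hfw
    linarith
  have hs1s2 : s1 < s2 := by linarith
  have h0s1 : 0 < s1 := by linarith
  rcases eq_or_lt_of_le hs2σ with heq | hlt
  · -- s2 = σ : touching local minimum at s2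
    have hlocmin : IsLocalMin (fun y : ℝ => c3*y^3 + c2*y^2 + c1*y + c0) s2 := by
      have hmem : Ioi v ∈ nhds s2 := Ioi_mem_nhds hvs2
      refine Filter.eventually_of_mem hmem ?_
      intro x hx
      rcases lt_trichotomy x s2 with h | h | h
      · have := hmid2 x (le_of_lt hx) h
        simp only [hs20]
        linarith
      · simp [h]
      · have := hposσ x (by rw [heq] at h; exact h)
        simp only [hs20]
        linarith
    have hq2 : 3*c3*s2^2 + 2*c2*s2 + c1 = 0 := by
      have := hlocmin.deriv_eq_zero
      rwa [cubic_deriv] at this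
    obtain ⟨cc, hcc1, hcc2, hqc⟩ := cubic_rolle hs1s2 hs10 hs20
    have := mono_neg hc3 hcc2 hqc hq2 hs10 h0s1 hcc1.le
    linarith
  · -- two zeros s2 < σ
    obtain ⟨cc1, h11, h12, hq1⟩ := cubic_rolle hs1s2 hs10 hs20
    obtain ⟨cc2, h21, h22, hq2⟩ := cubic_rolle hlt hs20 hσ0
    have := mono_neg hc3 (show cc1 < cc2 by linarith) hq1 hq2 hs10 h0s1 h11.le
    linarith

/-- Sign structure of the cubic on `(rp, ∞)`. -/
private lemma cubic_structure {c3 c2 c1 c0 rp M : ℝ} (hc3 : 0 < c3) (hrp : 0 < rp)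
    (hrpM : rp < M)
    (h0 : 0 ≤ c3*(0:ℝ)^3 + c2*(0:ℝ)^2 + c1*(0:ℝ) + c0)
    (hM : ∀ r, M ≤ r → 0 < c3*r^3 + c2*r^2 + c1*r + c0) :
    (∀ r, rp < r → 0 < c3*r^3 + c2*r^2 + c1*r + c0) ∨
    (∃ z, rp < z ∧ c3*z^3 + c2*z^2 + c1*z + c0 = 0 ∧
      ∀ r, rp < r → r ≠ z → 0 < c3*r^3 + c2*r^2 + c1*r + c0) ∨
    (∃ ρ2, rp < ρ2 ∧ c3*ρ2^3 + c2*ρ2^2 + c1*ρ2 + c0 = 0 ∧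
      (∀ r, rp < r → r < ρ2 → c3*r^3 + c2*r^2 + c1*r + c0 < 0) ∧
      (∀ r, ρ2 < r → 0 < c3*r^3 + c2*r^2 + c1*r + c0)) ∨
    (∃ ρ1 ρ2, rp < ρ1 ∧ ρ1 < ρ2 ∧
      c3*ρ1^3 + c2*ρ1^2 + c1*ρ1 + c0 = 0 ∧ c3*ρ2^3 + c2*ρ2^2 + c1*ρ2 + c0 = 0 ∧
      (∀ r, rp < r → r < ρ1 → 0 < c3*r^3 + c2*r^2 + c1*r + c0) ∧
      (∀ r, ρ1 < r → r < ρ2 → c3*r^3 + c2*r^2 + c1*r + c0 < 0) ∧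
      (∀ r, ρ2 < r → 0 < c3*r^3 + c2*r^2 + c1*r + c0)) := by
  by_cases hneg : ∃ x, rp < x ∧ c3*x^3 + c2*x^2 + c1*x + c0 ≤ 0
  swap
  · left
    intro r hr
    by_contra hc
    exact hneg ⟨r, hr, le_of_not_gt hc⟩
  obtain ⟨x₀, hx₀1, hx₀2⟩ := hneg
  obtain ⟨ρ2, hρ2lo, hρ2z, hpos2, hub2, happrox⟩ := cubic_sup hM ⟨x₀, hx₀1.le, hx₀2⟩
  have hrpρ2 : rp < ρ2 := lt_of_lt_of_le hx₀1 (hub2 x₀ hx₀1.le hx₀2)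
  by_cases hL : ∃ p, rp < p ∧ p < ρ2 ∧ 0 < c3*p^3 + c2*p^2 + c1*p + c0
  · -- positive point in the middle : cases (i-touching) or (iii)
    obtain ⟨p, hp1, hp2, hp3⟩ := hL
    obtain ⟨x₁, hpx₁, hx₁ρ2, hx₁⟩ := happrox p hp2
    have claimA : ∀ w, rp < w → w ≤ p → 0 < c3*w^3 + c2*w^2 + c1*w + c0 := by
      intro w hw1 hw2
      by_contra hc
      have hc' : c3*w^3 + c2*w^2 + c1*w + c0 ≤ 0 := le_of_not_gt hc
      have hwp : w < p := lt_of_le_of_ne hw2 (by rintro rfl; exact hc hp3)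
      exact cubic_npn hc3 h0 hM (by linarith) hwp hpx₁ hc' hp3 hx₁
    obtain ⟨ρ1, hpρ1, hρ1z, hmid1, hlb1⟩ := cubic_inf hM hp3 ⟨x₁, hpx₁, hx₁⟩
    have hρ1ρ2 : ρ1 ≤ ρ2 := le_trans (hlb1 x₁ hpx₁ hx₁) hx₁ρ2
    have leftpos : ∀ r, rp < r → r < ρ1 → 0 < c3*r^3 + c2*r^2 + c1*r + c0 := by
      intro r h1 h2
      rcases le_or_gt r p with h | h
      · exact claimA r h1 h
      · exact hmid1 r h.le h2
    rcases eq_or_lt_of_le hρ1ρ2 with heq | hlt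
    · -- single touching zero
      right; left
      refine ⟨ρ2, hrpρ2, hρ2z, ?_⟩
      intro r hr hne
      rcases lt_trichotomy r ρ2 with h | h | h
      · exact leftpos r hr (heq ▸ h)
      · exact absurd h hne
      · exact hpos2 r h
    · -- two zeros
      right; right; right
      have hrpρ1 : rp < ρ1 := by linarith
      have midneg : ∀ r, ρ1 < r → r < ρ2 → c3*r^3 + c2*r^2 + c1*r + c0 < 0 := by
        have hnonpos : ∀ y, ρ1 < y → y < ρ2 → c3*y^3 + c2*y^2 + c1*y + c0 ≤ 0 := by
          intro y h1 h2
          by_contra hcy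
          have hcy' : 0 < c3*y^3 + c2*y^2 + c1*y + c0 := lt_of_not_ge hcy
          obtain ⟨x₂, hyx₂, hx₂σ, hx₂⟩ := happrox y h2
          exact cubic_npn hc3 h0 hM (by linarith) h1 hyx₂ (le_of_eq hρ1z) hcy' hx₂
        intro r h1 h2
        rcases eq_or_lt_of_le (hnonpos r h1 h2) with hz | hz
        · exfalso
          have hlocmax : IsLocalMax (fun y : ℝ => c3*y^3 + c2*y^2 + c1*y + c0) r := by
            have hmem : Ioo ρ1 ρ2 ∈ nhds r := Ioo_mem_nhds h1 h2
            refine Filter.eventually_of_mem hmem ?_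
            intro x hx
            simp only [hz]
            exact hnonpos x hx.1 hx.2
          have hqr : 3*c3*r^2 + 2*c2*r + c1 = 0 := by
            have := hlocmax.deriv_eq_zero
            rwa [cubic_deriv] at this
          obtain ⟨cc, hcc1, hcc2, hqc⟩ := cubic_rolle h2 hz hρ2z
          have := mono_neg hc3 hcc1 hqr hqc hz (by linarith) (le_refl r)
          linarith
        · exact hz
      exact ⟨ρ1, ρ2, hrpρ1, hlt, hρ1z, hρ2z, leftpos, midneg, hpos2⟩
  · -- all nonpositive on the left : case (ii)
    right; right; left
    push_neg at hL
    refine ⟨ρ2, hrpρ2, hρ2z, ?_, hpos2⟩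
    intro r h1 h2
    rcases eq_or_lt_of_le (hL r h1 h2) with hz | hz
    · exfalso
      have hlocmax : IsLocalMax (fun y : ℝ => c3*y^3 + c2*y^2 + c1*y + c0) r := by
        have hmem : Ioo rp ρ2 ∈ nhds r := Ioo_mem_nhds h1 h2
        refine Filter.eventually_of_mem hmem ?_
        intro x hx
        simp only [hz]
        exact hL x hx.1 hx.2
      have hqr : 3*c3*r^2 + 2*c2*r + c1 = 0 := by
        have := hlocmax.deriv_eq_zero
        rwa [cubic_deriv] at this
      obtain ⟨cc, hcc1, hcc2, hqc⟩ := cubic_rolle h2 hz hρ2z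
      have := mono_neg hc3 hcc1 hqr hqc hz (by linarith) (le_refl r)
      linarith
    · exact hz

/-- The Kerr horizon function `Δ(r) = r² − 2mr + a²`. -/
def kerrDelta (m a r : ℝ) : ℝ := r ^ 2 - 2 * m * r + a ^ 2

/-- The larger root `r₊ = m + √(m² − a²)` of `Δ`. -/
def kerrRp (m a : ℝ) : ℝ := m + Real.sqrt (m ^ 2 - a ^ 2)

/-- The Kerr frequency potential `V`. -/
def kerrV (m a ξτ ξφ Λ r : ℝ) : ℝ :=
  (kerrDelta m a r * Λ ^ 2 - 4 * a * m * r * ξτ * ξφ - a ^ 2 * ξφ ^ 2) / (r ^ 2 + a ^ 2) ^ 2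

section KerrAux

variable (m a ξτ ξφ Λ : ℝ)

private lemma kerr_hasDerivAt (r : ℝ) (hu : (0:ℝ) < r^2 + a^2) :
    HasDerivAt (kerrV m a ξτ ξφ Λ)
      (-2 * (Λ^2*r^3 + (-(3*m*Λ^2) - 6*a*m*(ξτ*ξφ))*r^2 + (a^2*Λ^2 - 2*a^2*ξφ^2)*r
        + (m*a^2*Λ^2 + 2*a^3*m*(ξτ*ξφ))) / (r^2+a^2)^3) r := by
  have hA : HasDerivAt (fun x : ℝ => x^2 - 2*m*x + a^2) (2*r - 2*m) r := by
    have h := ((hasDerivAt_pow 2 r).sub ((hasDerivAt_id' r).const_mul (2*m))).add_const (a^2)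
    refine h.congr_deriv ?_
    push_cast
    ring
  have hB : HasDerivAt (fun x : ℝ => 4*a*m*x*ξτ*ξφ) (4*a*m*ξτ*ξφ) r := by
    have h := (((hasDerivAt_id' r).const_mul (4*a*m)).mul_const ξτ).mul_const ξφ
    refine h.congr_deriv ?_
    ring
  have hN : HasDerivAt (fun x : ℝ => (x^2 - 2*m*x + a^2)*Λ^2 - 4*a*m*x*ξτ*ξφ - a^2*ξφ^2)
      ((2*r - 2*m)*Λ^2 - 4*a*m*ξτ*ξφ) r :=
    ((hA.mul_const (Λ^2)).sub hB).sub_const (a^2*ξφ^2)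
  have hD : HasDerivAt (fun x : ℝ => (x^2 + a^2)^2) (2*(r^2+a^2)*(2*r)) r := by
    have h := ((hasDerivAt_pow 2 r).add_const (a^2)).pow 2
    refine h.congr_deriv ?_
    push_cast
    ring
  have hq := hN.div hD (by positivity)
  have hVeq : kerrV m a ξτ ξφ Λ = fun x : ℝ =>
      ((x^2 - 2*m*x + a^2)*Λ^2 - 4*a*m*x*ξτ*ξφ - a^2*ξφ^2)/((x^2 + a^2)^2) := by
    funext x
    simp only [kerrV, kerrDelta]
  rw [hVeq]
  refine hq.congr_deriv ?_
  have hu0 : (r^2 + a^2) ≠ 0 := hu.ne'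
  field_simp
  ring

end KerrAux

set_option maxHeartbeats 1000000 in
theorem kerr_potential_trichotomy (m a ξτ ξφ Λ : ℝ)
    (hm : 0 < m) (ha0 : 0 ≤ a) (ham : a < m)
    (hΛpos : 0 < Λ) (hΛφ : ξφ ^ 2 ≤ Λ ^ 2) (hΛτφ : 2 * |a * ξτ * ξφ| ≤ Λ ^ 2) :
    (StrictAntiOn (kerrV m a ξτ ξφ Λ) (Set.Ioi (kerrRp m a)) ∨
      (∃ rmax ∈ Set.Ioi (kerrRp m a),
        deriv (kerrV m a ξτ ξφ Λ) rmax = 0 ∧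
        (∀ r ∈ Set.Ioi (kerrRp m a), deriv (kerrV m a ξτ ξφ Λ) r = 0 → r = rmax) ∧
        (∀ r ∈ Set.Ioi (kerrRp m a), r ≠ rmax →
          kerrV m a ξτ ξφ Λ r < kerrV m a ξτ ξφ Λ rmax)) ∨
      (∃ rmin rmax : ℝ, kerrRp m a < rmin ∧ rmin < rmax ∧
        (∀ r ∈ Set.Ioi (kerrRp m a),
          deriv (kerrV m a ξτ ξφ Λ) r = 0 ↔ (r = rmin ∨ r = rmax)) ∧
        IsLocalMin (kerrV m a ξτ ξφ Λ) rmin ∧ IsLocalMax (kerrV m a ξτ ξφ Λ) rmax ∧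
        kerrV m a ξτ ξφ Λ rmin < ξτ ^ 2)) ∧
    (∀ r ∈ Set.Ioi (kerrRp m a), deriv (kerrV m a ξτ ξφ Λ) r = 0 →
      IsLocalMax (kerrV m a ξτ ξφ Λ) r → r ≤ 8 * m) := by
  have hE : |a*ξτ*ξφ| ≤ Λ^2/2 := by linarith
  have hE1 := (abs_le.mp hE).1
  have hE2 := (abs_le.mp hE).2
  have hc3 : (0:ℝ) < Λ^2 := pow_pos hΛpos 2
  have h0F : 0 ≤ Λ^2*(0:ℝ)^3 + (-(3*m*Λ^2) - 6*a*m*(ξτ*ξφ))*(0:ℝ)^2 + (a^2*Λ^2 - 2*a^2*ξφ^2)*(0:ℝ) + (m*a^2*Λ^2 + 2*a^3*m*(ξτ*ξφ)) := by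
    nlinarith [mul_le_mul_of_nonneg_left hE1 (show (0:ℝ) ≤ 2*a^2*m by positivity)]
  have hMpos : ∀ r, 7*m ≤ r → 0 < Λ^2*r^3 + (-(3*m*Λ^2) - 6*a*m*(ξτ*ξφ))*r^2 + (a^2*Λ^2 - 2*a^2*ξφ^2)*r + (m*a^2*Λ^2 + 2*a^3*m*(ξτ*ξφ)) := by
    intro r hr
    have hr0 : (0:ℝ) < r := by linarith
    have key : 0 < r^2 - 6*m*r - a^2 := by
      nlinarith [mul_nonneg (show (0:ℝ) ≤ r - 7*m by linarith) hr0.le,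
        mul_pos hm hm, mul_le_mul_of_nonneg_left ham.le ha0,
        mul_lt_mul_of_pos_left ham hm]
    have t1 : 0 ≤ 3*m*r^2*(Λ^2 - 2*(a*ξτ*ξφ)) := mul_nonneg (by positivity) (by linarith)
    have t2 : 0 ≤ 2*a^2*r*(Λ^2 - ξφ^2) := mul_nonneg (by positivity) (by linarith)
    have t3 : 0 ≤ m*a^2*(Λ^2 + 2*(a*ξτ*ξφ)) := mul_nonneg (by positivity) (by linarith)
    have t4 : 0 < Λ^2*r*(r^2 - 6*m*r - a^2) := mul_pos (mul_pos hc3 hr0) key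
    nlinarith [t1, t2, t3, t4]
  have hupos : ∀ r : ℝ, 0 < r → (0:ℝ) < r^2 + a^2 :=
    fun r hr => add_pos_of_pos_of_nonneg (pow_pos hr 2) (sq_nonneg a)
  -- facts about r₊
  have hma2 : (0:ℝ) ≤ m^2 - a^2 := by nlinarith
  have hsq : Real.sqrt (m^2 - a^2)^2 = m^2 - a^2 := Real.sq_sqrt hma2
  have hsnn : 0 ≤ Real.sqrt (m^2 - a^2) := Real.sqrt_nonneg _
  set rp := kerrRp m a with hrpd
  have hrp0 : 0 < rp := by rw [hrpd, kerrRp]; linarith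
  have hsle : Real.sqrt (m^2 - a^2) ≤ m := by
    have h1 : Real.sqrt (m^2 - a^2) ≤ Real.sqrt (m^2) := Real.sqrt_le_sqrt (by nlinarith)
    rwa [Real.sqrt_sq hm.le] at h1
  have hrple : rp ≤ 2*m := by rw [hrpd, kerrRp]; linarith
  have hrp2 : rp^2 + a^2 = 2*m*rp := by
    rw [hrpd, kerrRp]; linear_combination hsq
  have hrpM : rp < 7*m := by linarith
  -- derivative and continuity facts
  have hdV : ∀ r : ℝ, 0 < r → HasDerivAt (kerrV m a ξτ ξφ Λ)
      (-2 * (Λ^2*r^3 + (-(3*m*Λ^2) - 6*a*m*(ξτ*ξφ))*r^2 + (a^2*Λ^2 - 2*a^2*ξφ^2)*r + (m*a^2*Λ^2 + 2*a^3*m*(ξτ*ξφ))) / (r^2+a^2)^3) r :=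
    fun r hr => kerr_hasDerivAt m a ξτ ξφ Λ r (hupos r hr)
  have hderiv : ∀ r : ℝ, 0 < r →
      deriv (kerrV m a ξτ ξφ Λ) r = -2 * (Λ^2*r^3 + (-(3*m*Λ^2) - 6*a*m*(ξτ*ξφ))*r^2 + (a^2*Λ^2 - 2*a^2*ξφ^2)*r + (m*a^2*Λ^2 + 2*a^3*m*(ξτ*ξφ))) / (r^2+a^2)^3 :=
    fun r hr => (hdV r hr).deriv
  have hcont : ∀ r : ℝ, 0 < r → ContinuousAt (kerrV m a ξτ ξφ Λ) r :=
    fun r hr => (hdV r hr).differentiableAt.continuousAt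
  have hcrit : ∀ r : ℝ, 0 < r → (deriv (kerrV m a ξτ ξφ Λ) r = 0 ↔ Λ^2*r^3 + (-(3*m*Λ^2) - 6*a*m*(ξτ*ξφ))*r^2 + (a^2*Λ^2 - 2*a^2*ξφ^2)*r + (m*a^2*Λ^2 + 2*a^3*m*(ξτ*ξφ)) = 0) := by
    intro r hr
    rw [hderiv r hr]
    constructor
    · intro h
      have hu3 : (r^2 + a^2)^3 ≠ 0 := (pow_pos (hupos r hr) 3).ne'
      rcases div_eq_zero_iff.mp h with h' | h'
      · linarith
      · exact absurd h' hu3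
    · intro h; rw [h]; ring
  -- monotonicity helpers
  have Vanti : ∀ x y : ℝ, 0 < x → x < y → (∀ r, x < r → r < y → 0 < Λ^2*r^3 + (-(3*m*Λ^2) - 6*a*m*(ξτ*ξφ))*r^2 + (a^2*Λ^2 - 2*a^2*ξφ^2)*r + (m*a^2*Λ^2 + 2*a^3*m*(ξτ*ξφ))) →
      StrictAntiOn (kerrV m a ξτ ξφ Λ) (Icc x y) := by
    intro x y hx hxy hQ
    apply strictAntiOn_of_deriv_neg (convex_Icc x y)
    · exact fun r hr => (hcont r (lt_of_lt_of_le hx hr.1)).continuousWithinAt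
    · intro r hr
      rw [interior_Icc] at hr
      have hr0 : 0 < r := hx.trans hr.1
      rw [hderiv r hr0]
      apply div_neg_of_neg_of_pos
      · linarith [hQ r hr.1 hr.2]
      · exact pow_pos (hupos r hr0) 3
  have Vmono : ∀ x y : ℝ, 0 < x → x < y → (∀ r, x < r → r < y → Λ^2*r^3 + (-(3*m*Λ^2) - 6*a*m*(ξτ*ξφ))*r^2 + (a^2*Λ^2 - 2*a^2*ξφ^2)*r + (m*a^2*Λ^2 + 2*a^3*m*(ξτ*ξφ)) < 0) →
      StrictMonoOn (kerrV m a ξτ ξφ Λ) (Icc x y) := by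
    intro x y hx hxy hQ
    apply strictMonoOn_of_deriv_pos (convex_Icc x y)
    · exact fun r hr => (hcont r (lt_of_lt_of_le hx hr.1)).continuousWithinAt
    · intro r hr
      rw [interior_Icc] at hr
      have hr0 : 0 < r := hx.trans hr.1
      rw [hderiv r hr0]
      apply div_pos
      · linarith [hQ r hr.1 hr.2]
      · exact pow_pos (hupos r hr0) 3
  have VantiIci : ∀ x : ℝ, 0 < x → (∀ r, x < r → 0 < Λ^2*r^3 + (-(3*m*Λ^2) - 6*a*m*(ξτ*ξφ))*r^2 + (a^2*Λ^2 - 2*a^2*ξφ^2)*r + (m*a^2*Λ^2 + 2*a^3*m*(ξτ*ξφ))) →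
      StrictAntiOn (kerrV m a ξτ ξφ Λ) (Ici x) := by
    intro x hx hQ
    apply strictAntiOn_of_deriv_neg (convex_Ici x)
    · exact fun r hr => (hcont r (lt_of_lt_of_le hx hr)).continuousWithinAt
    · intro r hr
      rw [interior_Ici] at hr
      have hr0 : 0 < r := hx.trans hr
      rw [hderiv r hr0]
      apply div_neg_of_neg_of_pos
      · linarith [hQ r hr]
      · exact pow_pos (hupos r hr0) 3
  -- value of V at r₊
  have hΔ0 : kerrDelta m a rp = 0 := by
    simp only [kerrDelta]; linarith [hrp2]
  have hVrp_le : kerrV m a ξτ ξφ Λ rp ≤ ξτ^2 := by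
    have heq : kerrV m a ξτ ξφ Λ rp
        = (-(4*a*m*rp*ξτ*ξφ) - a^2*ξφ^2)/(2*m*rp)^2 := by
      simp only [kerrV]
      rw [hΔ0, hrp2]
      ring
    rw [heq, div_le_iff₀ (by positivity)]
    nlinarith [sq_nonneg (2*m*rp*ξτ + a*ξφ)]
  constructor
  · -- main trichotomy
    rcases cubic_structure hc3 hrp0 hrpM h0F hMpos with hQpos | ⟨z, hz1, hz2, hz3⟩ |
      ⟨ρ2, hρ2a, hρ2z, hneg, hpos⟩ | ⟨ρ1, ρ2, hρ1a, h12, hρ1z, hρ2z, hleft, hmid, hright⟩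
    · -- strictly decreasing
      left
      apply strictAntiOn_of_deriv_neg (convex_Ioi _)
      · exact fun r hr => (hcont r (hrp0.trans hr)).continuousWithinAt
      · intro r hr
        rw [interior_Ioi] at hr
        have hr0 : 0 < r := hrp0.trans hr
        rw [hderiv r hr0]
        apply div_neg_of_neg_of_pos
        · linarith [hQpos r hr]
        · exact pow_pos (hupos r hr0) 3
    · -- touching zero : still strictly decreasing
      left
      intro x hx y hy hxy
      simp only [mem_Ioi] at hx hy
      have hx0 : 0 < x := hrp0.trans hx
      rcases le_or_gt y z with hyz | hzy
      · exact Vanti x y hx0 hxy (fun r h1 h2 => hz3 r (hx.trans h1) (by linarith))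
          (left_mem_Icc.mpr hxy.le) (right_mem_Icc.mpr hxy.le) hxy
      · rcases le_or_gt z x with hzx | hxz
        · exact Vanti x y hx0 hxy (fun r h1 h2 => hz3 r (hx.trans h1) (by linarith))
            (left_mem_Icc.mpr hxy.le) (right_mem_Icc.mpr hxy.le) hxy
        · have h1 : kerrV m a ξτ ξφ Λ z < kerrV m a ξτ ξφ Λ x :=
            Vanti x z hx0 hxz (fun r h1 h2 => hz3 r (hx.trans h1) (by linarith))
              (left_mem_Icc.mpr hxz.le) (right_mem_Icc.mpr hxz.le) hxz
          have h2 : kerrV m a ξτ ξφ Λ y < kerrV m a ξτ ξφ Λ z :=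
            Vanti z y (hrp0.trans hz1) hzy (fun r h1 h2 => hz3 r (hz1.trans h1) (by linarith))
              (left_mem_Icc.mpr hzy.le) (right_mem_Icc.mpr hzy.le) hzy
          linarith
    · -- unique global maximum
      right; left
      have hρ20 : 0 < ρ2 := hrp0.trans hρ2a
      refine ⟨ρ2, hρ2a, ?_, ?_, ?_⟩
      · exact (hcrit ρ2 hρ20).mpr hρ2z
      · intro r hr h0
        simp only [mem_Ioi] at hr
        have hq0 := (hcrit r (hrp0.trans hr)).mp h0
        rcases lt_trichotomy r ρ2 with h | h | h
        · exact absurd hq0 (ne_of_lt (hneg r hr h))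
        · exact h
        · exact absurd hq0 (ne_of_gt (hpos r h))
      · intro r hr hne
        simp only [mem_Ioi] at hr
        rcases lt_or_gt_of_ne hne with h | h
        · exact Vmono r ρ2 (hrp0.trans hr) h (fun s h1 h2 => hneg s (hr.trans h1) h2)
            (left_mem_Icc.mpr h.le) (right_mem_Icc.mpr h.le) h
        · exact VantiIci ρ2 hρ20 hpos self_mem_Ici (mem_Ici.mpr h.le) h
    · -- minimum and maximum
      right; right
      have hρ10 : 0 < ρ1 := hrp0.trans hρ1a
      have hρ20 : 0 < ρ2 := by linarith
      refine ⟨ρ1, ρ2, hρ1a, h12, ?_, ?_, ?_, ?_⟩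
      · -- characterization of critical points
        intro r hr
        simp only [mem_Ioi] at hr
        rw [hcrit r (hrp0.trans hr)]
        constructor
        · intro hq0
          rcases lt_trichotomy r ρ1 with h | h | h
          · exact absurd hq0 (ne_of_gt (hleft r hr h))
          · exact Or.inl h
          · rcases lt_trichotomy r ρ2 with h' | h' | h'
            · exact absurd hq0 (ne_of_lt (hmid r h h'))
            · exact Or.inr h'
            · exact absurd hq0 (ne_of_gt (hright r h'))
        · rintro (rfl | rfl)
          · exact hρ1z
          · exact hρ2z
      · -- local minimum at ρ1
        have hA : StrictAntiOn (kerrV m a ξτ ξφ Λ) (Icc ((rp + ρ1)/2) ρ1) :=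
          Vanti _ _ (by linarith) (by linarith)
            (fun r h1 h2 => hleft r (by linarith) h2)
        have hB : StrictMonoOn (kerrV m a ξτ ξφ Λ) (Icc ρ1 ρ2) :=
          Vmono _ _ hρ10 h12 hmid
        have hmem : Ioo ((rp + ρ1)/2) ρ2 ∈ nhds ρ1 :=
          Ioo_mem_nhds (by linarith) h12
        refine Filter.eventually_of_mem hmem ?_
        intro x hx
        rcases lt_trichotomy x ρ1 with h | h | h
        · exact le_of_lt (hA ⟨hx.1.le, h.le⟩ ⟨by linarith, le_refl ρ1⟩ h)
        · rw [h]
        · exact le_of_lt (hB ⟨le_refl ρ1, h12.le⟩ ⟨h.le, hx.2.le⟩ h)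
      · -- local maximum at ρ2
        have hB : StrictMonoOn (kerrV m a ξτ ξφ Λ) (Icc ρ1 ρ2) :=
          Vmono _ _ hρ10 h12 hmid
        have hC : StrictAntiOn (kerrV m a ξτ ξφ Λ) (Ici ρ2) := VantiIci ρ2 hρ20 hright
        have hmem : Ioi ρ1 ∈ nhds ρ2 := Ioi_mem_nhds h12
        refine Filter.eventually_of_mem hmem ?_
        intro x hx
        rcases le_or_gt x ρ2 with h | h
        · rcases eq_or_lt_of_le h with h' | h'
          · rw [h']
          · exact le_of_lt (hB ⟨le_of_lt hx, h⟩ ⟨h12.le, le_refl ρ2⟩ h')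
        · exact le_of_lt (hC self_mem_Ici (mem_Ici.mpr h.le) h)
      · -- value bound at the minimum
        have hA : StrictAntiOn (kerrV m a ξτ ξφ Λ) (Icc rp ρ1) :=
          Vanti _ _ hrp0 hρ1a hleft
        have := hA (left_mem_Icc.mpr hρ1a.le) (right_mem_Icc.mpr hρ1a.le) hρ1a
        linarith
  · -- any critical point is ≤ 8m
    intro r hr h0 _
    simp only [mem_Ioi] at hr
    have hq0 := (hcrit r (hrp0.trans hr)).mp h0
    by_contra hc
    push_neg at hc
    have := hMpos r (by linarith)
    linarith
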